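/- Let V be a finite-dimensional real vector space, p : V → W a surjective linear map onto a space W, ω an alternating bilinear form on V whose restriction to F = ker p is nondegenerate, and λ a nondegenerate alternating bilinear form on W. Then for all sufficiently large real c, the form Λ = ω + c · p*λ (where p*λ(ξ, η) = λ(p ξ, p η)) is nondegenerate on V. -/

import Mathlib

open LinearMap in
private lemma det_key {n : Type*} [Fintype n] [DecidableEq n] (MA MB : Matrix n n ℝ)
    (hB : MB.det ≠ 0) : ∃ c₀ : ℝ, ∀ c : ℝ, c₀ ≤ c → (MA + c • MB).det ≠ 0 := by
  have hcont : Continuous fun t : ℝ => (MB + t • MA).det := by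
    apply Continuous.matrix_det
    fun_prop
  have h0 : (fun t : ℝ => (MB + t • MA).det) 0 ≠ 0 := by simpa using hB
  have hev : ∀ᶠ t in nhds (0 : ℝ), (MB + t • MA).det ≠ 0 :=
    hcont.continuousAt.eventually_ne h0
  obtain ⟨ε, hε, hball⟩ := Metric.eventually_nhds_iff.mp hev
  refine ⟨2 / ε, fun c hc => ?_⟩
  have hcpos : 0 < c := lt_of_lt_of_le (by positivity) hc
  have hinv : dist c⁻¹ (0 : ℝ) < ε := by
    rw [Real.dist_eq, sub_zero, abs_of_pos (by positivity)]
    have h2 : (2 : ℝ) / ε ≤ c := hc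
    have : c⁻¹ ≤ ε / 2 := by
      rw [inv_le_comm₀ hcpos (by positivity)] at *
      calc (ε / 2)⁻¹ = 2 / ε := by rw [inv_div]
        _ ≤ c := hc
    linarith
  have hd := hball hinv
  have heq : MA + c • MB = c • (MB + c⁻¹ • MA) := by
    rw [smul_add, smul_smul, mul_inv_cancel₀ hcpos.ne', one_smul, add_comm]
  rw [heq, Matrix.det_smul]
  exact mul_ne_zero (pow_ne_zero _ hcpos.ne') hd

private lemma bilin_key {W : Type*} [AddCommGroup W] [Module ℝ W] [FiniteDimensional ℝ W]
    (A B : LinearMap.BilinForm ℝ W) (hB : B.Nondegenerate) :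
    ∃ c₀ : ℝ, ∀ c : ℝ, c₀ ≤ c → (A + c • B).Nondegenerate := by
  let b := Module.finBasis ℝ W
  obtain ⟨c₀, h⟩ := det_key (BilinForm.toMatrix b A) (BilinForm.toMatrix b B)
    ((LinearMap.BilinForm.nondegenerate_iff_det_ne_zero b).mp hB)
  refine ⟨c₀, fun c hc => (LinearMap.BilinForm.nondegenerate_iff_det_ne_zero b).mpr ?_⟩
  rw [map_add, map_smul]
  exact h c hc

/-- Let `p : V → W` be a surjective linear map of finite-dimensional
real vector spaces, `ω` an alternating bilinear form on `V` whose restriction to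
`F = ker p` is nondegenerate, and `λ` a nondegenerate alternating bilinear form
on `W`. Then for all sufficiently large `c`, the form `Λ = ω + c • p*λ` is
nondegenerate on `V`. -/
theorem stmt_10 {V W : Type*} [AddCommGroup V] [Module ℝ V] [FiniteDimensional ℝ V]
    [AddCommGroup W] [Module ℝ W] [FiniteDimensional ℝ W]
    (p : V →ₗ[ℝ] W) (hp : Function.Surjective p)
    (ω : LinearMap.BilinForm ℝ V) (hωalt : ω.IsAlt)
    (hωF : ∀ v ∈ LinearMap.ker p, (∀ u ∈ LinearMap.ker p, ω v u = 0) → v = 0)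
    (lam : LinearMap.BilinForm ℝ W) (hlamalt : lam.IsAlt)
    (hlam : ∀ w : W, (∀ u : W, lam w u = 0) → w = 0) :
    ∃ c₀ : ℝ, ∀ c : ℝ, c₀ ≤ c →
      ∀ v : V, (∀ u : V, ω v u + c * lam (p v) (p u) = 0) → v = 0 := by
  classical
  set F := LinearMap.ker p with hF
  have hrefl : ω.IsRefl := hωalt.isRefl
  have hres : (ω.restrict F).Nondegenerate := by
    refine (LinearMap.IsRefl.nondegenerate_iff_separatingLeft
      (fun x y h => hrefl x.1 y.1 h)).mpr ?_
    intro x hx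
    exact Subtype.ext (hωF x.1 x.2 fun u hu => by simpa using hx ⟨u, hu⟩)
  set G := ω.orthogonal F with hG
  have hcompl : IsCompl F G := ω.isCompl_orthogonal_of_restrict_nondegenerate hrefl hres
  let q : G →ₗ[ℝ] W := p.domRestrict G
  have hqinj : Function.Injective q := by
    rw [← LinearMap.ker_eq_bot, eq_bot_iff]
    intro x hx
    have hxF : (x : V) ∈ F := hx
    have : (x : V) ∈ F ⊓ G := ⟨hxF, x.2⟩
    rw [hcompl.inf_eq_bot] at this
    rw [Submodule.mem_bot]
    exact Subtype.ext (by simpa using this)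
  have hqsurj : Function.Surjective q := by
    intro w
    obtain ⟨v, hv⟩ := hp w
    obtain ⟨f, hf, g, hg, hfg⟩ := Submodule.mem_sup.mp
      (by rw [hcompl.sup_eq_top]; trivial : v ∈ F ⊔ G)
    refine ⟨⟨g, hg⟩, ?_⟩
    have hpf : p f = 0 := hf
    have : p g = w := by
      have := congrArg p hfg
      rw [map_add, hpf, zero_add] at this
      rw [this, hv]
    simpa [q, LinearMap.domRestrict_apply]
  let e : G ≃ₗ[ℝ] W := LinearEquiv.ofBijective q ⟨hqinj, hqsurj⟩
  let μ : LinearMap.BilinForm ℝ W :=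
    (ω.restrict G).compl₁₂ e.symm.toLinearMap e.symm.toLinearMap
  obtain ⟨c₀, hc₀⟩ := bilin_key μ lam
    ((LinearMap.IsRefl.nondegenerate_iff_separatingLeft hlamalt.isRefl).mpr hlam)
  refine ⟨c₀, fun c hc v H => ?_⟩
  obtain ⟨f, hf, g, hg, hfg⟩ := Submodule.mem_sup.mp
    (by rw [hcompl.sup_eq_top]; trivial : v ∈ F ⊔ G)
  have hfz : f = 0 := by
    apply hωF f hf
    intro u hu
    have hpu : p u = 0 := hu
    have h1 := H u
    rw [hpu, map_zero, mul_zero, add_zero] at h1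
    have hgu : ω g u = 0 := hrefl u g (hg u hu)
    have hsplit : ω v u = ω f u + ω g u := by
      rw [← hfg, map_add]; rfl
    rw [hsplit, hgu, add_zero] at h1
    exact h1
  have hvg : v = g := by rw [← hfg, hfz, zero_add]
  have hvG : v ∈ G := hvg ▸ hg
  have hepv : e ⟨v, hvG⟩ = p v := rfl
  have hW : ∀ u' : W, μ (p v) u' + c * lam (p v) u' = 0 := by
    intro u'
    have hpe : p ((e.symm u' : G) : V) = u' := by
      exact e.apply_symm_apply u'
    have hsymmpv : e.symm (p v) = ⟨v, hvG⟩ := by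
      apply e.injective; rw [e.apply_symm_apply, hepv]
    have h1 := H ((e.symm u' : G) : V)
    rw [hpe] at h1
    have hμ : μ (p v) u' = ω v ((e.symm u' : G) : V) := by
      simp only [μ, LinearMap.compl₁₂_apply, LinearEquiv.coe_coe, hsymmpv,
        LinearMap.BilinForm.restrict_apply, Submodule.coe_subtype, LinearMap.domRestrict_apply]
    rw [hμ]
    exact h1
  have hpv : p v = 0 := (hc₀ c hc).1 (p v) (by
    intro u'
    have := hW u'
    simpa [LinearMap.add_apply, LinearMap.smul_apply, smul_eq_mul] using this)
  have : v ∈ F ⊓ G := ⟨hpv, hvG⟩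
  rw [hcompl.inf_eq_bot] at this
  exact this
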